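/- Let T be a triangulated category with thick subcategories X and Y, and set U = X ∩ Y. If both X * Y = T and Y * X = T, then there is a splitting triangle equivalence T/U ≃ X/U × Y/U. -/

import Mathlib

open CategoryTheory Limits Pretriangulated

universe v u

namespace CategoryTheory.Triangulated

/-- The (December 2024) Mathlib notion of a triangulated subcategory, removed since. -/
structure Subcategory (C : Type u) [Category.{v} C] [HasZeroObject C] [HasShift C ℤ]
    [Preadditive C] [∀ n : ℤ, (shiftFunctor C n).Additive] [Pretriangulated C] where
  P : C → Prop
  zero' : ∃ (Z : C) (_ : IsZero Z), P Z
  shift (X : C) (n : ℤ) : P X → P (X⟦n⟧)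
  ext₂' (T : Triangle C) (_ : T ∈ distTriang C) : P T.obj₁ → P T.obj₃ → ObjectProperty.isoClosure P T.obj₂

namespace Subcategory

open ZeroObject

variable {C : Type u} [Category.{v} C] [HasZeroObject C] [HasShift C ℤ]
  [Preadditive C] [∀ n : ℤ, (shiftFunctor C n).Additive] [Pretriangulated C]

lemma zero (S : Subcategory C) [ObjectProperty.IsClosedUnderIsomorphisms S.P] : S.P 0 := by
  obtain ⟨X, hX, mem⟩ := S.zero'
  exact ObjectProperty.prop_of_iso _ hX.isoZero mem

def mk' (P : C → Prop) (zero : P 0)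
    (shift : ∀ (X : C) (n : ℤ), P X → P (X⟦n⟧))
    (ext₂ : ∀ (T : Triangle C) (_ : T ∈ distTriang C), P T.obj₁ → P T.obj₃ → P T.obj₂) :
    Subcategory C where
  P := P
  zero' := ⟨0, isZero_zero _, zero⟩
  shift := shift
  ext₂' T hT h₁ h₃ := ⟨_, ext₂ T hT h₁ h₃, ⟨Iso.refl _⟩⟩

lemma ext₂ (S : Subcategory C) [ObjectProperty.IsClosedUnderIsomorphisms S.P]
    (T : Triangle C) (hT : T ∈ distTriang C) (h₁ : S.P T.obj₁) (h₃ : S.P T.obj₃) :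
    S.P T.obj₂ := by
  obtain ⟨Y, hY, ⟨e⟩⟩ := S.ext₂' T hT h₁ h₃
  exact ObjectProperty.prop_of_iso _ e.symm hY

def W (S : Subcategory C) : MorphismProperty C := fun X Y f =>
  ∃ (Z : C) (g : Y ⟶ Z) (h : Z ⟶ X⟦(1 : ℤ)⟧) (_ : Triangle.mk f g h ∈ distTriang C), S.P Z

end Subcategory

end CategoryTheory.Triangulated

variable {C : Type u} [Category.{v} C] [HasZeroObject C] [HasShift C ℤ]
  [Preadditive C] [∀ n : ℤ, (shiftFunctor C n).Additive] [Pretriangulated C]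

/-- `S * T` for classes of objects of a pretriangulated category. -/
def star (S T : Set C) : Set C :=
  {E | ∃ (X Y : C) (f : X ⟶ E) (g : E ⟶ Y) (h : Y ⟶ X⟦(1 : ℤ)⟧),
    X ∈ S ∧ Y ∈ T ∧ Triangle.mk f g h ∈ distTriang C}

/-- The intersection of two (strictly full) triangulated subcategories. -/
def interSub (X Y : Triangulated.Subcategory C) [ObjectProperty.IsClosedUnderIsomorphisms X.P]
    [ObjectProperty.IsClosedUnderIsomorphisms Y.P] : Triangulated.Subcategory C :=
  Triangulated.Subcategory.mk' (fun t => X.P t ∧ Y.P t)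
    ⟨X.zero, Y.zero⟩
    (fun t n h => ⟨X.shift t n h.1, Y.shift t n h.2⟩)
    (fun T hT h₁ h₃ => ⟨X.ext₂ T hT h₁.1 h₃.1, Y.ext₂ T hT h₁.2 h₃.2⟩)

section Aux

variable [IsTriangulated C]

instance instIsTriangulatedSubP (S : Triangulated.Subcategory C) :
    ObjectProperty.IsTriangulated S.P where
  exists_zero := by
    obtain ⟨Z, hZ, h⟩ := S.zero'
    exact ⟨Z, hZ, h⟩
  isStableUnderShiftBy a := ⟨fun X hX => S.shift X a hX⟩
  ext₂' := S.ext₂'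

instance instHasLeftCalcSubW (S : Triangulated.Subcategory C) :
    S.W.HasLeftCalculusOfFractions :=
  inferInstanceAs (ObjectProperty.trW S.P).HasLeftCalculusOfFractions

instance instHasRightCalcSubW (S : Triangulated.Subcategory C) :
    S.W.HasRightCalculusOfFractions :=
  inferInstanceAs (ObjectProperty.trW S.P).HasRightCalculusOfFractions

instance instCompatTriangSubW (S : Triangulated.Subcategory C) :
    S.W.IsCompatibleWithTriangulation :=
  inferInstanceAs (ObjectProperty.trW S.P).IsCompatibleWithTriangulation

instance instCompatShiftSubW (S : Triangulated.Subcategory C) :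
    S.W.IsCompatibleWithShift ℤ :=
  inferInstanceAs ((ObjectProperty.trW S.P).IsCompatibleWithShift ℤ)

instance instMultSubW (S : Triangulated.Subcategory C) :
    S.W.IsMultiplicative :=
  inferInstanceAs (ObjectProperty.trW S.P).IsMultiplicative

instance instFinProdSubW (S : Triangulated.Subcategory C) :
    S.W.IsStableUnderFiniteProducts :=
  inferInstanceAs (ObjectProperty.trW S.P).IsStableUnderFiniteProducts

lemma aux_fac (A B : Triangulated.Subcategory C)
    [ObjectProperty.IsClosedUnderIsomorphisms A.P] [ObjectProperty.IsClosedUnderIsomorphisms B.P]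
    (hstar : ∀ E : C, E ∈ star {a | A.P a} {b | B.P b})
    {x y : C} (hx : A.P x) (hy : B.P y) (f : x ⟶ y) :
    ∃ (y₂ : C) (s : y ⟶ y₂) (u : C) (v : y₂ ⟶ u) (w : u ⟶ y⟦(1 : ℤ)⟧),
      (Triangle.mk s v w ∈ distTriang C) ∧ A.P u ∧ B.P u ∧ f ≫ s = 0 := by
  obtain ⟨c, g, h, hT⟩ := Pretriangulated.distinguished_cocone_triangle f
  obtain ⟨x₂, y₂, a, b, h₂, hx₂, hy₂, hT₂⟩ := hstar c
  obtain ⟨u, v, w, hu⟩ := Pretriangulated.distinguished_cocone_triangle (g ≫ b)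
  have oct := Triangulated.someOctahedron (u₁₂ := g) (u₂₃ := b) rfl
    (rot_of_distTriang _ hT) (rot_of_distTriang _ hT₂) hu
  exact ⟨y₂, g ≫ b, u, v, w, hu,
    A.ext₂ _ oct.mem (A.shift _ 1 hx) (A.shift _ 1 hx₂),
    B.ext₂ _ (rot_of_distTriang _ hu) hy₂ (B.shift _ 1 hy),
    by
      have hz : f ≫ g = 0 := comp_distTriang_mor_zero₁₂ _ hT
      rw [← Category.assoc, hz, zero_comp]⟩

lemma aux_hom_zero (S A B : Triangulated.Subcategory C)
    [ObjectProperty.IsClosedUnderIsomorphisms A.P] [ObjectProperty.IsClosedUnderIsomorphisms B.P]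
    (hSB : ∀ u, S.P u → B.P u)
    (hABS : ∀ u, A.P u → B.P u → S.P u)
    (hstar : ∀ E : C, E ∈ star {a | A.P a} {b | B.P b})
    {x y : C} (hx : A.P x) (hy : B.P y) (φ : S.W.Q.obj x ⟶ S.W.Q.obj y) : φ = 0 := by
  obtain ⟨α, hα⟩ := Localization.exists_leftFraction S.W.Q S.W φ
  have hY' : B.P α.Y' := by
    obtain ⟨Z, g', h', hTs, hZ⟩ := α.hs
    exact B.ext₂ _ hTs hy (hSB _ hZ)
  obtain ⟨y₂, s', u, v, w, hT', hAu, hBu, hfs⟩ := aux_fac A B hstar hx hY' α.f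
  have hws' : S.W s' := ⟨u, v, w, hT', hABS u hAu hBu⟩
  have h1 : IsIso (S.W.Q.map s') := Localization.inverts _ S.W s' hws'
  have hf : S.W.Q.map α.f = 0 := by
    rw [← cancel_mono (S.W.Q.map s'), ← S.W.Q.map_comp, hfs, S.W.Q.map_zero, zero_comp]
  have hsiso : IsIso (S.W.Q.map α.s) := Localization.inverts _ S.W _ α.hs
  rw [hα, ← cancel_mono (S.W.Q.map α.s), MorphismProperty.LeftFraction.map_comp_map_s, hf,
    zero_comp]

lemma aux_hom_zero' (S A B : Triangulated.Subcategory C)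
    [ObjectProperty.IsClosedUnderIsomorphisms A.P] [ObjectProperty.IsClosedUnderIsomorphisms B.P]
    (hSB : ∀ u, S.P u → B.P u)
    (hABS : ∀ u, A.P u → B.P u → S.P u)
    (hstar : ∀ E : C, E ∈ star {a | A.P a} {b | B.P b})
    {d e : S.W.Localization} {x y : C} (hx : A.P x) (hy : B.P y)
    (e₁ : d ≅ S.W.Q.obj x) (e₂ : e ≅ S.W.Q.obj y) (m : d ⟶ e) : m = 0 := by
  have hm : m = e₁.hom ≫ (e₁.inv ≫ m ≫ e₂.hom) ≫ e₂.inv := by simp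
  rw [hm, aux_hom_zero S A B hSB hABS hstar hx hy (e₁.inv ≫ m ≫ e₂.hom), zero_comp, comp_zero]

end Aux

/-- (Jørgensen–Kato) If `X`, `Y` are thick subcategories of a triangulated category `C`
with `U = X ∩ Y` and `X * Y = C = Y * X`, then there is a splitting equivalence
`C/U ≌ X/U × Y/U`, where `X/U` and `Y/U` are realized as the full subcategories of the
Verdier quotient `C/U` given by the essential images of `X` and `Y`. -/
theorem splitting_equivalence_of_star_eq_top [IsTriangulated C]
    (X Y : Triangulated.Subcategory C)
    [ObjectProperty.IsClosedUnderIsomorphisms X.P] [ObjectProperty.IsClosedUnderIsomorphisms Y.P]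
    (hXthick : ∀ ⦃a b : C⦄ (i : a ⟶ b) (r : b ⟶ a), i ≫ r = 𝟙 a → X.P b → X.P a)
    (hYthick : ∀ ⦃a b : C⦄ (i : a ⟶ b) (r : b ⟶ a), i ≫ r = 𝟙 a → Y.P b → Y.P a)
    (hstarXY : ∀ E : C, E ∈ star {x | X.P x} {y | Y.P y})
    (hstarYX : ∀ E : C, E ∈ star {y | Y.P y} {x | X.P x}) :
    Nonempty ((interSub X Y).W.Localization ≌
      (ObjectProperty.FullSubcategory fun d : (interSub X Y).W.Localization =>
        ∃ x : C, X.P x ∧ Nonempty (d ≅ (interSub X Y).W.Q.obj x)) ×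
      (ObjectProperty.FullSubcategory fun d : (interSub X Y).W.Localization =>
        ∃ y : C, Y.P y ∧ Nonempty (d ≅ (interSub X Y).W.Q.obj y))) := by
  set S := interSub X Y with hSdef
  have hSX : ∀ u, S.P u → X.P u := fun u h => h.1
  have hSY : ∀ u, S.P u → Y.P u := fun u h => h.2
  have hXYS : ∀ u, X.P u → Y.P u → S.P u := fun u h1 h2 => ⟨h1, h2⟩
  have hYXS : ∀ u, Y.P u → X.P u → S.P u := fun u h1 h2 => ⟨h2, h1⟩
  -- the hom-vanishing results in the quotient
  have hzXY : ∀ {d e : S.W.Localization} {x y : C}, X.P x → Y.P y →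
      (d ≅ S.W.Q.obj x) → (e ≅ S.W.Q.obj y) → ∀ m : d ⟶ e, m = 0 :=
    fun hx hy e₁ e₂ m => aux_hom_zero' S X Y hSY hXYS hstarXY hx hy e₁ e₂ m
  have hzYX : ∀ {d e : S.W.Localization} {y x : C}, Y.P y → X.P x →
      (d ≅ S.W.Q.obj y) → (e ≅ S.W.Q.obj x) → ∀ m : d ⟶ e, m = 0 :=
    fun hy hx e₁ e₂ m => aux_hom_zero' S Y X hSX hYXS hstarYX hy hx e₁ e₂ m
  -- the functor
  let DX := ObjectProperty.FullSubcategory fun d : S.W.Localization =>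
    ∃ x : C, X.P x ∧ Nonempty (d ≅ S.W.Q.obj x)
  let DY := ObjectProperty.FullSubcategory fun d : S.W.Localization =>
    ∃ y : C, Y.P y ∧ Nonempty (d ≅ S.W.Q.obj y)
  let F : DX × DY ⥤ S.W.Localization :=
    { obj := fun p => p.1.obj ⊞ p.2.obj
      map := fun f => biprod.map f.1.hom f.2.hom
      map_id := fun p => by
        apply biprod.hom_ext' <;> apply biprod.hom_ext <;> (simp; try rfl)
      map_comp := fun f g => by
        apply biprod.hom_ext' <;> apply biprod.hom_ext <;> (simp; try rfl) }
  have hFull : F.Full := by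
    constructor
    intro p q h
    obtain ⟨⟨p1, hp1⟩, ⟨p2, hp2⟩⟩ := p
    obtain ⟨⟨q1, hq1⟩, ⟨q2, hq2⟩⟩ := q
    obtain ⟨x₁, hx₁, ⟨i₁⟩⟩ := hp1
    obtain ⟨y₁, hy₁, ⟨j₁⟩⟩ := hp2
    obtain ⟨x₂, hx₂, ⟨i₂⟩⟩ := hq1
    obtain ⟨y₂, hy₂, ⟨j₂⟩⟩ := hq2
    let h' : p1 ⊞ p2 ⟶ q1 ⊞ q2 := h
    let a : p1 ⟶ q1 := biprod.inl ≫ h' ≫ biprod.fst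
    let b : p2 ⟶ q2 := biprod.inr ≫ h' ≫ biprod.snd
    refine ⟨(ObjectProperty.homMk a, ObjectProperty.homMk b), ?_⟩
    have c₁ : biprod.inl ≫ h' ≫ biprod.snd = 0 := hzXY hx₁ hy₂ i₁ j₂ _
    have c₂ : biprod.inr ≫ h' ≫ biprod.fst = 0 := hzYX hy₁ hx₂ j₁ i₂ _
    show biprod.map a b = h'
    apply biprod.hom_ext' <;> apply biprod.hom_ext <;> simp [a, b, c₁, c₂]
  have hFaithful : F.Faithful := by
    constructor
    intro p q f g hfg
    have h1 : biprod.inl ≫ F.map f ≫ biprod.fst = biprod.inl ≫ F.map g ≫ biprod.fst := by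
      rw [hfg]
    have h2 : biprod.inr ≫ F.map f ≫ biprod.snd = biprod.inr ≫ F.map g ≫ biprod.snd := by
      rw [hfg]
    simp only [F, biprod.inl_map_assoc, biprod.map_fst, biprod.inl_fst, Category.comp_id,
      biprod.inr_map_assoc, biprod.map_snd, biprod.inr_snd] at h1 h2
    exact Prod.ext (ObjectProperty.hom_ext _ (by simpa using h1)) (ObjectProperty.hom_ext _ (by simpa using h2))
  have hEssSurj : F.EssSurj := by
    constructor
    intro d
    have := Localization.essSurj S.W.Q S.W
    obtain ⟨E, ⟨eE⟩⟩ : ∃ E : C, Nonempty (S.W.Q.obj E ≅ d) :=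
      ⟨_, ⟨S.W.Q.objObjPreimageIso d⟩⟩
    obtain ⟨x, y, f, g, h, hx, hy, hT⟩ := hstarXY E
    have hT' := S.W.Q.map_distinguished _ hT
    have hzero : (S.W.Q.mapTriangle.obj (Triangle.mk f g h)).mor₃ = 0 :=
      hzYX hy (X.shift x 1 hx) (Iso.refl _) ((S.W.Q.commShiftIso (1 : ℤ)).app x).symm _
    obtain ⟨e₂, -, -⟩ := exists_iso_binaryBiproduct_of_distTriang _ hT' hzero
    exact ⟨(⟨S.W.Q.obj x, x, hx, ⟨Iso.refl _⟩⟩, ⟨S.W.Q.obj y, y, hy, ⟨Iso.refl _⟩⟩),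
      ⟨e₂.symm ≪≫ eE⟩⟩
  have : F.IsEquivalence := { }
  exact ⟨F.asEquivalence.symm⟩
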